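/- The map f : c ↦ Q*(c) assigning to each cost the unique fixed point of its Bellman operator is injective. In fact, ‖c̃ − c‖_∞ ≤ (1+β) ‖Q*(c̃) − Q*(c)‖_∞, so distinct costs yield distinct fixed points. -/

import Mathlib

open Finset

lemma inf_diff_abs_le {A : Type*} [Fintype A] [Nonempty A] (g h : A → ℝ) (M : ℝ)
    (hM : ∀ b, |g b - h b| ≤ M) : |(⨅ b, g b) - ⨅ b, h b| ≤ M := by
  rw [abs_sub_le_iff]
  constructor
  · obtain ⟨b₀, hb₀⟩ := Finite.exists_min h
    have h1 : (⨅ b, g b) ≤ g b₀ := ciInf_le (Finite.bddBelow_range g) b₀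
    have h2 : g b₀ ≤ h b₀ + M := by have := (abs_sub_le_iff.1 (hM b₀)).1; linarith
    have h3 : h b₀ ≤ ⨅ b, h b := le_ciInf hb₀
    linarith
  · obtain ⟨b₀, hb₀⟩ := Finite.exists_min g
    have h1 : (⨅ b, h b) ≤ h b₀ := ciInf_le (Finite.bddBelow_range h) b₀
    have h2 : h b₀ ≤ g b₀ + M := by have := (abs_sub_le_iff.1 (hM b₀)).2; linarith
    have h3 : g b₀ ≤ ⨅ b, g b := le_ciInf hb₀
    linarith

theorem cost_to_fixed_point_injective {S A : Type*} [Fintype S] [Fintype A] [Nonempty S] [Nonempty A]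
    (p : S → S → A → ℝ) (hp0 : ∀ i j a, 0 ≤ p i j a) (hp1 : ∀ i a, ∑ j, p i j a = 1)
    (β : ℝ) (hβ0 : 0 < β) (hβ1 : β < 1)
    (f : (S × A → ℝ) → (S × A → ℝ))
    (hf : ∀ c : S × A → ℝ, ∀ i a, f c (i, a) = c (i, a) + β * ∑ j, p i j a * (⨅ b, f c (j, b))) :
    Function.Injective f ∧
      ∀ c ctil : S × A → ℝ, ‖ctil - c‖ ≤ (1 + β) * ‖f ctil - f c‖ := by
  have key : ∀ c ctil : S × A → ℝ, ‖ctil - c‖ ≤ (1 + β) * ‖f ctil - f c‖ := by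
    intro c ctil
    set D : S × A → ℝ := f ctil - f c with hD
    have hDle : ∀ x : S × A, |D x| ≤ ‖D‖ := by
      intro x
      have := norm_le_pi_norm D x
      simpa using this
    rw [pi_norm_le_iff_of_nonneg (by positivity)]
    rintro ⟨i, a⟩
    have hc : c (i, a) = f c (i, a) - β * ∑ j, p i j a * (⨅ b, f c (j, b)) := by
      rw [hf c i a]; ring
    have hct : ctil (i, a) = f ctil (i, a) - β * ∑ j, p i j a * (⨅ b, f ctil (j, b)) := by
      rw [hf ctil i a]; ring
    have heq : (ctil - c) (i, a)
        = D (i, a) - β * ∑ j, p i j a * ((⨅ b, f ctil (j, b)) - ⨅ b, f c (j, b)) := by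
      simp only [Pi.sub_apply, hD, hct, hc]
      rw [Finset.sum_congr rfl (fun j _ => mul_sub (p i j a) _ _), Finset.sum_sub_distrib]
      ring
    have hsum : |∑ j, p i j a * ((⨅ b, f ctil (j, b)) - ⨅ b, f c (j, b))| ≤ ‖D‖ := by
      calc |∑ j, p i j a * ((⨅ b, f ctil (j, b)) - ⨅ b, f c (j, b))|
          ≤ ∑ j, |p i j a * ((⨅ b, f ctil (j, b)) - ⨅ b, f c (j, b))| :=
            Finset.abs_sum_le_sum_abs _ _
        _ ≤ ∑ j, p i j a * ‖D‖ := by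
            apply Finset.sum_le_sum
            intro j _
            rw [abs_mul, abs_of_nonneg (hp0 i j a)]
            apply mul_le_mul_of_nonneg_left _ (hp0 i j a)
            apply inf_diff_abs_le
            intro b
            exact hDle (j, b)
        _ = ‖D‖ := by rw [← Finset.sum_mul, hp1 i a, one_mul]
    have : ‖(ctil - c) (i, a)‖ = |(ctil - c) (i, a)| := rfl
    rw [this, heq]
    calc |D (i, a) - β * ∑ j, p i j a * ((⨅ b, f ctil (j, b)) - ⨅ b, f c (j, b))|
        ≤ |D (i, a)| + |β * ∑ j, p i j a * ((⨅ b, f ctil (j, b)) - ⨅ b, f c (j, b))| :=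
          abs_sub _ _
      _ ≤ ‖D‖ + β * ‖D‖ := by
          rw [abs_mul, abs_of_pos hβ0]
          exact add_le_add (hDle _) (mul_le_mul_of_nonneg_left hsum hβ0.le)
      _ = (1 + β) * ‖D‖ := by ring
  refine ⟨?_, key⟩
  intro c ctil h
  have := key ctil c
  rw [h] at this
  simp only [sub_self, norm_zero, mul_zero] at this
  have : c - ctil = 0 := by
    have h0 : ‖c - ctil‖ ≤ 0 := this
    simpa using norm_le_zero_iff.1 h0
  exact sub_eq_zero.1 this
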